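/- The category PER of partial equivalence relations on ℕ is cartesian closed: the product of PERs A and B is given by x (A×B) y iff π₁(x) A π₁(y) ∧ π₂(x) B π₂(y) under a recursive pairing, and the exponential by e (B^A) r iff ∀ a a', a A a' → e·a is defined, r·a' is defined, and (e·a) B (r·a'), under a fixed enumeration of partial recursive functions. -/

import Mathlib

/-- A partial equivalence relation (PER) on ℕ: a symmetric and transitive relation. -/
structure PERN : Type where
  r : ℕ → ℕ → Prop
  symm : ∀ {a b}, r a b → r b a
  trans : ∀ {a b c}, r a b → r b c → r a c

/-- Kleene application: evaluation of the `e`-th partial recursive function at `a`,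
under the standard enumeration of codes. -/
def evalCode (e a : ℕ) : Part ℕ :=
  Nat.Partrec.Code.eval (Denumerable.ofNat Nat.Partrec.Code e) a

/-- The (code of a) partial recursive function `e` tracks a morphism of PERs `A → B`:
it maps `A`-related elements to defined, `B`-related values.  Morphisms of the category
`PER` are functions between quotients tracked by such codes. -/
def Tracks (A B : PERN) (e : ℕ) : Prop :=
  ∀ a a', A.r a a' → ∃ b ∈ evalCode e a, ∃ b' ∈ evalCode e a', B.r b b'

/-- Two trackers determine the same morphism of PERs `C → D` (equal maps of quotients). -/
def ExtEq (C D : PERN) (h h' : ℕ) : Prop :=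
  ∀ a, C.r a a → ∀ b ∈ evalCode h a, ∀ b' ∈ evalCode h' a, D.r b b'

/-- `e₂ ∘ e₁ = f` as morphisms of PERs `C → B`. -/
def CompEq (C B : PERN) (e₂ e₁ f : ℕ) : Prop :=
  ∀ a, C.r a a → ∀ v ∈ evalCode e₁ a, ∀ u ∈ evalCode e₂ v, ∀ w ∈ evalCode f a, B.r u w

/-- The product PER: `x (A × B) y iff π₁ x A π₁ y ∧ π₂ x B π₂ y` under the recursive
pairing `Nat.pair`/`Nat.unpair`. -/
def prodPER (A B : PERN) : PERN where
  r x y := A.r x.unpair.1 y.unpair.1 ∧ B.r x.unpair.2 y.unpair.2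
  symm := fun h => ⟨A.symm h.1, B.symm h.2⟩
  trans := fun h h' => ⟨A.trans h.1 h'.1, B.trans h.2 h'.2⟩

/-- The exponential PER: `e (B^A) r iff ∀ a a', a A a' → e·a and r·a' are defined and
(e·a) B (r·a')`. -/
def expPER (A B : PERN) : PERN where
  r e r' := ∀ a a', A.r a a' → ∃ b ∈ evalCode e a, ∃ b' ∈ evalCode r' a', B.r b b'
  symm := by
    intro e r' h a a' haa'
    obtain ⟨b, hb, b', hb', hB⟩ := h a' a (PERN.symm _ haa')
    exact ⟨b', hb', b, hb, PERN.symm _ hB⟩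
  trans := by
    intro e r' s h1 h2 a a' haa'
    obtain ⟨b, hb, b', hb', hB⟩ := h1 a a' haa'
    obtain ⟨c, hc, c', hc', hB'⟩ := h2 a' a' (PERN.trans _ (PERN.symm _ haa') haa')
    refine ⟨b, hb, c', hc', ?_⟩
    exact PERN.trans _ hB (by rwa [Part.mem_unique hc hb'] at hB')

/-- The category `PER` of partial equivalence relations on ℕ is cartesian closed:
it has a terminal object, binary products given by `prodPER` (with projections computing
the recursive unpairing), and exponentials given by `expPER` (with Kleene application as
evaluation), each satisfying the appropriate universal property up to equality of morphisms
(i.e. up to `ExtEq`). -/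
lemma evalCode_encode (c : Nat.Partrec.Code) (a : ℕ) :
    evalCode (Encodable.encode c) a = c.eval a := by
  unfold evalCode; rw [Denumerable.ofNat_encode]

lemma exists_part_code (f : ℕ →. ℕ) (hf : Partrec f) :
    ∃ e : ℕ, ∀ a, evalCode e a = f a := by
  obtain ⟨c, hc⟩ := Nat.Partrec.Code.exists_code.1 (Partrec.nat_iff.1 hf)
  exact ⟨Encodable.encode c, fun a => by rw [evalCode_encode, hc]⟩

lemma exists_total_code (f : ℕ → ℕ) (hf : Computable f) :
    ∃ e : ℕ, ∀ a, evalCode e a = Part.some (f a) :=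
  exists_part_code (fun a => Part.some (f a)) hf

lemma partrec_evalCode (e : ℕ) : Partrec (evalCode e) :=
  Partrec.nat_iff.2 (Nat.Partrec.Code.exists_code.2 ⟨_, rfl⟩)

lemma tracks_refl {C D : PERN} {e : ℕ} (h : Tracks C D e) {a : ℕ} (ha : C.r a a) :
    ∀ b ∈ evalCode e a, ∀ b' ∈ evalCode e a, D.r b b' := by
  obtain ⟨b, hb, b', hb', hd⟩ := h a a ha
  intro c hc c' hc'
  rw [Part.mem_unique hc hb, Part.mem_unique hc' hb']
  exact hd

theorem PER_cartesianClosed :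
    (∃ T : PERN, ∀ A : PERN, ∃ u, Tracks A T u ∧
      ∀ u', Tracks A T u' → ExtEq A T u u') ∧
    (∀ A B : PERN, ∃ p₁ p₂ : ℕ,
      Tracks (prodPER A B) A p₁ ∧ Tracks (prodPER A B) B p₂ ∧
      (∀ n, (prodPER A B).r n n → ∀ b ∈ evalCode p₁ n, A.r b n.unpair.1) ∧
      (∀ n, (prodPER A B).r n n → ∀ b ∈ evalCode p₂ n, B.r b n.unpair.2) ∧
      ∀ (C : PERN) (f' g' : ℕ), Tracks C A f' → Tracks C B g' →
        ∃ h, Tracks C (prodPER A B) h ∧ CompEq C A p₁ h f' ∧ CompEq C B p₂ h g' ∧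
          ∀ h', Tracks C (prodPER A B) h' → CompEq C A p₁ h' f' → CompEq C B p₂ h' g' →
            ExtEq C (prodPER A B) h' h) ∧
    (∀ A B : PERN, ∃ ev : ℕ,
      Tracks (prodPER (expPER A B) A) B ev ∧
      (∀ n, (prodPER (expPER A B) A).r n n → ∀ b ∈ evalCode ev n,
        ∀ b' ∈ evalCode n.unpair.1 n.unpair.2, B.r b b') ∧
      ∀ (C : PERN) (f' : ℕ), Tracks (prodPER C A) B f' →
        ∃ h, Tracks C (expPER A B) h ∧
          (∀ a x, C.r a a → A.r x x → ∀ e ∈ evalCode h a, ∀ b ∈ evalCode ev (Nat.pair e x),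
            ∀ b' ∈ evalCode f' (Nat.pair a x), B.r b b') ∧
          ∀ h', Tracks C (expPER A B) h' →
            (∀ a x, C.r a a → A.r x x → ∀ e ∈ evalCode h' a, ∀ b ∈ evalCode ev (Nat.pair e x),
              ∀ b' ∈ evalCode f' (Nat.pair a x), B.r b b') →
            ExtEq C (expPER A B) h' h) := by
  refine ⟨?_, ?_, ?_⟩
  · -- terminal object
    refine ⟨⟨fun _ _ => True, fun _ => trivial, fun _ _ => trivial⟩, fun A => ?_⟩
    obtain ⟨u, hu⟩ := exists_total_code (fun _ => 0) (Computable.const 0)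
    refine ⟨u, fun a a' _ => ⟨0, by rw [hu]; exact Part.mem_some _,
      0, by rw [hu]; exact Part.mem_some _, trivial⟩, ?_⟩
    intro u' _ a _ b _ b' _; trivial
  · -- binary products
    intro A B
    obtain ⟨p₁, hp₁⟩ := exists_total_code (fun n => n.unpair.1)
      (Primrec.to_comp (Primrec.fst.comp Primrec.unpair))
    obtain ⟨p₂, hp₂⟩ := exists_total_code (fun n => n.unpair.2)
      (Primrec.to_comp (Primrec.snd.comp Primrec.unpair))
    refine ⟨p₁, p₂, ?_, ?_, ?_, ?_, ?_⟩
    · intro x y hxy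
      exact ⟨_, by rw [hp₁]; exact Part.mem_some _, _, by rw [hp₁]; exact Part.mem_some _, hxy.1⟩
    · intro x y hxy
      exact ⟨_, by rw [hp₂]; exact Part.mem_some _, _, by rw [hp₂]; exact Part.mem_some _, hxy.2⟩
    · intro n hn b hb
      rw [hp₁] at hb
      rw [Part.mem_some_iff.1 hb]
      exact hn.1
    · intro n hn b hb
      rw [hp₂] at hb
      rw [Part.mem_some_iff.1 hb]
      exact hn.2
    · intro C f' g' hf hg
      have hpart : Partrec (fun a => (evalCode f' a).bind
          fun x => (evalCode g' a).map (Nat.pair x)) :=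
        (partrec_evalCode f').bind
          (Partrec.map ((partrec_evalCode g').comp Computable.fst)
            (Primrec₂.to_comp (Primrec₂.natPair.comp
              (Primrec.snd.comp Primrec.fst) Primrec.snd)))
      obtain ⟨h, hh⟩ := exists_part_code _ hpart
      have hmem : ∀ a v, v ∈ evalCode h a ↔
          ∃ x ∈ evalCode f' a, ∃ y ∈ evalCode g' a, v = Nat.pair x y := by
        intro a v
        rw [hh]
        simp only [Part.mem_bind_iff, Part.mem_map_iff]
        constructor
        · rintro ⟨x, hx, y, hy, rfl⟩; exact ⟨x, hx, y, hy, rfl⟩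
        · rintro ⟨x, hx, y, hy, rfl⟩; exact ⟨x, hx, y, hy, rfl⟩
      refine ⟨h, ?_, ?_, ?_, ?_⟩
      · -- h tracks
        intro a a' haa'
        obtain ⟨x, hx, x', hx', hA⟩ := hf a a' haa'
        obtain ⟨y, hy, y', hy', hB⟩ := hg a a' haa'
        refine ⟨Nat.pair x y, (hmem a _).2 ⟨x, hx, y, hy, rfl⟩,
          Nat.pair x' y', (hmem a' _).2 ⟨x', hx', y', hy', rfl⟩, ?_⟩
        simp only [prodPER, Nat.unpair_pair]
        exact ⟨hA, hB⟩
      · -- p₁ ∘ h = f'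
        intro a ha v hv u hu w hw
        obtain ⟨x, hx, y, hy, rfl⟩ := (hmem a v).1 hv
        rw [hp₁] at hu
        rw [Part.mem_some_iff.1 hu, Nat.unpair_pair]
        exact tracks_refl hf ha x hx w hw
      · -- p₂ ∘ h = g'
        intro a ha v hv u hu w hw
        obtain ⟨x, hx, y, hy, rfl⟩ := (hmem a v).1 hv
        rw [hp₂] at hu
        rw [Part.mem_some_iff.1 hu, Nat.unpair_pair]
        exact tracks_refl hg ha y hy w hw
      · -- uniqueness
        intro h' _ hc1 hc2 a ha b hb b' hb'
        obtain ⟨x, hx, y, hy, rfl⟩ := (hmem a b').1 hb'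
        have h1 : A.r b.unpair.1 x := by
          refine hc1 a ha b hb b.unpair.1 ?_ x hx
          rw [hp₁]; exact Part.mem_some _
        have h2 : B.r b.unpair.2 y := by
          refine hc2 a ha b hb b.unpair.2 ?_ y hy
          rw [hp₂]; exact Part.mem_some _
        simp only [prodPER, Nat.unpair_pair]
        exact ⟨h1, h2⟩
  · -- exponentials
    intro A B
    have hev : Partrec (fun n : ℕ => evalCode n.unpair.1 n.unpair.2) :=
      Nat.Partrec.Code.eval_part.comp
        ((Computable.ofNat _).comp (Primrec.to_comp (Primrec.fst.comp Primrec.unpair)))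
        (Primrec.to_comp (Primrec.snd.comp Primrec.unpair))
    obtain ⟨ev, hevc⟩ := exists_part_code _ hev
    refine ⟨ev, ?_, ?_, ?_⟩
    · -- ev tracks
      intro n n' hnn'
      obtain ⟨b, hb, b', hb', hB⟩ := hnn'.1 n.unpair.2 n'.unpair.2 hnn'.2
      exact ⟨b, by rw [hevc]; exact hb, b', by rw [hevc]; exact hb', hB⟩
    · -- ev computes application
      intro n hn b hb b' hb'
      rw [hevc] at hb
      obtain ⟨c, hc, c', hc', hB⟩ := hn.1 n.unpair.2 n.unpair.2 hn.2
      rw [Part.mem_unique hb hc, Part.mem_unique hb' hc']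
      exact hB
    · -- currying
      intro C f' hf
      obtain ⟨h, hh⟩ := exists_total_code
        (fun a => Encodable.encode ((Denumerable.ofNat Nat.Partrec.Code f').curry a))
        (Primrec.to_comp (Primrec.encode.comp
          (Nat.Partrec.Code.primrec₂_curry.comp
            (Primrec.const (Denumerable.ofNat Nat.Partrec.Code f')) Primrec.id)))
      have key : ∀ a x,
          evalCode (Encodable.encode ((Denumerable.ofNat Nat.Partrec.Code f').curry a)) x
            = evalCode f' (Nat.pair a x) := by
        intro a x
        rw [evalCode_encode, Nat.Partrec.Code.eval_curry]
        rfl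
      refine ⟨h, ?_, ?_, ?_⟩
      · -- h tracks into the exponential
        intro a a' haa'
        refine ⟨_, by rw [hh]; exact Part.mem_some _, _, by rw [hh]; exact Part.mem_some _, ?_⟩
        intro x x' hxx'
        have hrel : (prodPER C A).r (Nat.pair a x) (Nat.pair a' x') := by
          simp only [prodPER, Nat.unpair_pair]
          exact ⟨haa', hxx'⟩
        obtain ⟨b, hb, b', hb', hB⟩ := hf _ _ hrel
        exact ⟨b, by rw [key]; exact hb, b', by rw [key]; exact hb', hB⟩
      · -- triangle identity
        intro a x ha hx e he b hb b' hb'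
        rw [hh] at he
        obtain rfl := Part.mem_some_iff.1 he
        rw [hevc] at hb
        simp only [Nat.unpair_pair] at hb
        rw [key] at hb
        have hrel : (prodPER C A).r (Nat.pair a x) (Nat.pair a x) := by
          simp only [prodPER, Nat.unpair_pair]
          exact ⟨ha, hx⟩
        exact tracks_refl hf hrel b hb b' hb'
      · -- uniqueness
        intro h' hh' htri a ha e' he' e he
        rw [hh] at he
        obtain rfl := Part.mem_some_iff.1 he
        intro x x' hxx'
        have hx : A.r x x := A.trans hxx' (A.symm hxx')
        -- value of e' at x
        obtain ⟨b, hb, b2, hb2, hBb⟩ := tracks_refl hh' ha e' he' e' he' x x hx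
        -- value of f' at pair a x and pair a x'
        have hrel : (prodPER C A).r (Nat.pair a x) (Nat.pair a x') := by
          simp only [prodPER, Nat.unpair_pair]
          exact ⟨ha, hxx'⟩
        obtain ⟨u, hu, u', hu', hBuu'⟩ := hf _ _ hrel
        -- htri gives B b u
        have hBbu : B.r b u := by
          refine htri a x ha hx e' he' b ?_ u hu
          rw [hevc]
          simp only [Nat.unpair_pair]
          exact hb
        refine ⟨b, hb, u', by rw [key]; exact hu', B.trans hBbu hBuu'⟩
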